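/- Let M be a Poisson(M₀) random variable (M₀ > 0) independent of the experiment data, and fix ℓ ≥ 1. Then the leave-ℓ-out cross-validation estimator, rescaled by ℓ!/M₀^ℓ and summed over all folds, is unbiased for the expected true reward of the rule applied to the full data: E[ (ℓ!/M₀^ℓ) · ∑_{p ⊆ {1,…,M}, |p| = ℓ} R̂^{CV}_p ] = E[ R_{D(𝐎)} ], where R_{D(𝐎)} denotes the (random) true mean reward R_k of the arm k = D(𝐎) chosen by the rule on the full M-unit dataset. -/

import Mathlib

open MeasureTheory ProbabilityTheory Real NNReal ENNReal

/-- The joint law of a finite subfamily of an independent family of random variables,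
selected along an injective reindexing, is the product of the marginals. -/
lemma aux_map_pi {Ω : Type*} [MeasurableSpace Ω] {μ : Measure Ω} [IsProbabilityMeasure μ]
    {ι ι' : Type*} [Fintype ι'] {β : Type*} [MeasurableSpace β]
    {f : ι → Ω → β}
    (hindep : iIndepFun f μ) (hmeas : ∀ i, Measurable (f i))
    (e : ι' → ι) (he : Function.Injective e) :
    Measure.map (fun ω (i : ι') => f (e i) ω) μ
      = Measure.pi (fun i : ι' => Measure.map (f (e i)) μ) := by
  classical
  haveI : ∀ i : ι', IsProbabilityMeasure (Measure.map (f (e i)) μ) :=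
    fun i => Measure.isProbabilityMeasure_map (hmeas (e i)).aemeasurable
  refine (Measure.pi_eq fun s hs => ?_).symm
  rw [Measure.map_apply (measurable_pi_lambda _ fun i => hmeas (e i))
    (MeasurableSet.univ_pi hs)]
  set sets : ι → Set β := fun j => ⋂ (i : ι') (_ : e i = j), s i with hsets
  have hsets_meas : ∀ j ∈ Finset.univ.image e, MeasurableSet (sets j) := by
    intro j _
    exact MeasurableSet.iInter fun i => MeasurableSet.iInter fun _ => hs i
  have hsets_e : ∀ i : ι', sets (e i) = s i := by
    intro i
    apply Set.Subset.antisymm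
    · intro x hx
      exact Set.mem_iInter₂.1 hx i rfl
    · intro x hx
      refine Set.mem_iInter₂.2 fun i' hi' => ?_
      cases he hi'
      exact hx
  have hpre : (fun ω (i : ι') => f (e i) ω) ⁻¹' Set.pi Set.univ s
      = ⋂ j ∈ Finset.univ.image e, f j ⁻¹' sets j := by
    ext ω
    simp only [Set.mem_preimage, Set.mem_pi, Set.mem_univ, forall_true_left,
      Set.mem_iInter, Finset.mem_image, Finset.mem_univ, true_and]
    constructor
    · rintro h j ⟨i, rfl⟩
      rw [hsets_e]
      exact h i
    · intro h i
      have := h (e i) ⟨i, rfl⟩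
      rwa [hsets_e] at this
  rw [hpre, hindep.measure_inter_preimage_eq_mul (Finset.univ.image e) hsets_meas,
    Finset.prod_image (fun i _ i' _ h => he h)]
  refine Finset.prod_congr rfl fun i _ => ?_
  rw [hsets_e, Measure.map_apply (hmeas (e i)) (hs i)]

/-- unbiasedness of leave-`ℓ`-out cross-validation under Poisson sample
sizes: A single experiment with `K ≥ 1` arms; for each arm `k` the observations
`(O k m)_{m ∈ ℕ}` form an i.i.d. sequence in `ℝ^J`, independent across arms and units;
`ψ` is a bounded measurable reward with arm means `R k`; the sample size `M` is
`Poisson(M₀)` (`M₀ > 0`), independent of all observations.  A decision rule is a family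
`D t` of measurable maps from `K`-armed datasets with `t` units per arm (encoded as
infinite sequences read only on their first `t` coordinates) to an arm.  For each fold
`p ⊆ {0,…,M−1}` with `|p| = ℓ` (`ℓ ≥ 1`), the rule is applied to the remaining units
taken in increasing order, `D(𝐎_{−p})`, and
`R̂^{CV}_p = ℓ⁻¹ ∑_{m ∈ p} ψ(O_{D(𝐎_{−p}), m})`.  Then
`E[(ℓ!/M₀^ℓ) ∑_{|p| = ℓ} R̂^{CV}_p] = E[R_{D(𝐎)}]`, where `D(𝐎)` is the rule applied
to the full `M`-unit dataset. -/
theorem leave_ell_out_cv_unbiased_poisson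
    {Ωs : Type*} [MeasurableSpace Ωs] (P : Measure Ωs) [IsProbabilityMeasure P]
    (J K : ℕ) (hK : 1 ≤ K)
    (O : Fin K → ℕ → Ωs → (Fin J → ℝ))
    (hOmeas : ∀ k m, Measurable (O k m))
    -- independence across all arms and units:
    (hOindep : iIndepFun
      (fun km : Fin K × ℕ => O km.1 km.2) P)
    -- within each arm the observations are identically distributed:
    (hOident : ∀ k m m', Measure.map (O k m) P = Measure.map (O k m') P)
    (ψ : (Fin J → ℝ) → ℝ) (hψ : Measurable ψ) (C : ℝ) (hbdd : ∀ v, |ψ v| ≤ C)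
    -- the true mean reward of each arm:
    (R : Fin K → ℝ) (hR : ∀ k m, ∫ ω, ψ (O k m ω) ∂P = R k)
    -- the Poisson sample size, independent of all observations:
    (M₀ : ℝ≥0) (hM₀ : 0 < M₀) (M : Ωs → ℕ) (hM : Measurable M)
    (hMpoisson : Measure.map M P = poissonMeasure M₀)
    (hMindep : IndepFun M (fun ω => fun km : Fin K × ℕ => O km.1 km.2 ω) P)
    -- the decision rule: for each dataset size `t`, a measurable map reading only the
    -- first `t` units of each arm:
    (D : ℕ → (Fin K → ℕ → (Fin J → ℝ)) → Fin K)
    (hDmeas : ∀ t, Measurable (D t))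
    (hDlocal : ∀ t, ∀ data data' : Fin K → ℕ → (Fin J → ℝ),
      (∀ k j, j < t → data k j = data' k j) → D t data = D t data')
    (ℓ : ℕ) (hℓ : 1 ≤ ℓ)
    -- the rule applied to the full dataset:
    (DecFull : Ωs → Fin K)
    (hDecFull : DecFull = fun ω => D (M ω) (fun k m => O k m ω))
    -- the rule applied to the dataset with the fold `p` removed, remaining units taken
    -- in increasing order:
    (DecCV : Ωs → Finset ℕ → Fin K)
    (hDecCV : DecCV = fun ω p => D (M ω - ℓ)
      (fun k j => O k (((Finset.range (M ω) \ p).sort (· ≤ ·)).getD j 0) ω))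
    -- the cross-validation estimator on fold `p`:
    (RCV : Ωs → Finset ℕ → ℝ)
    (hRCV : RCV = fun ω p => (ℓ : ℝ)⁻¹ * ∑ m ∈ p, ψ (O (DecCV ω p) m ω)) :
    ∫ ω, ((Nat.factorial ℓ : ℝ) / (M₀ : ℝ) ^ ℓ) *
        ∑ p ∈ Finset.powersetCard ℓ (Finset.range (M ω)), RCV ω p ∂P =
      ∫ ω, R (DecFull ω) ∂P := by
  classical
  -- notation
  set c : ℝ := (Nat.factorial ℓ : ℝ) / (M₀ : ℝ) ^ ℓ with hc
  set pmf : ℕ → ℝ := poissonPMFReal M₀ with hpmf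
  set f : ℕ → ℝ := fun t => ∫ ω, R (D t (fun k m => O k m ω)) ∂P with hf
  set sfun : ℕ → Finset ℕ → ℕ → ℕ :=
    fun n p j => ((Finset.range n \ p).sort (· ≤ ·)).getD j 0 with hsfun
  set DP : ℕ → Finset ℕ → Ωs → Fin K :=
    fun n p ω => D (n - ℓ) (fun k j => O k (sfun n p j) ω) with hDP
  set G : ℕ → Ωs → ℝ := fun n ω => ∑ p ∈ Finset.powersetCard ℓ (Finset.range n),
    (ℓ : ℝ)⁻¹ * ∑ m ∈ p, ψ (O (DP n p ω) m ω) with hG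
  -- basic facts
  have h0C : 0 ≤ C := le_trans (abs_nonneg _) (hbdd 0)
  have hRbdd : ∀ k, |R k| ≤ C := by
    intro k
    rw [← hR k 0]
    rw [← Real.norm_eq_abs]
    have := norm_integral_le_of_norm_le_const (μ := P)
      (f := fun ω => ψ (O k 0 ω)) (C := C)
      (Filter.Eventually.of_forall fun ω => by simpa using hbdd _)
    simpa using this
  have hintble : ∀ (g : Ωs → ℝ) (B : ℝ), Measurable g → (∀ ω, |g ω| ≤ B) →
      Integrable g P := by
    intro g B hg hB
    refine Integrable.mono' (integrable_const B) hg.aestronglyMeasurable ?_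
    exact Filter.Eventually.of_forall fun ω => (Real.norm_eq_abs _).le.trans (hB ω)
  -- measurability of decision composites
  have hDmeas' : ∀ (t : ℕ) (s : ℕ → ℕ), Measurable (fun ω => D t (fun k j => O k (s j) ω)) := by
    intro t s
    exact (hDmeas t).comp (measurable_pi_lambda _ fun k =>
      measurable_pi_lambda _ fun j => hOmeas k (s j))
  have hprob : ∀ n : ℕ, P (M ⁻¹' {n}) = ENNReal.ofReal (pmf n) := by
    intro n
    rw [← Measure.map_apply hM (measurableSet_singleton n), hMpoisson]
    rw [poissonMeasure_singleton]
    rfl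
  have hsummable : Summable pmf := (poissonPMFRealSum M₀).summable
  have hpmf_nonneg : ∀ n, 0 ≤ pmf n := fun n => poissonPMFReal_nonneg
  have hc_nonneg : 0 ≤ c := div_nonneg (Nat.cast_nonneg _) (pow_nonneg M₀.coe_nonneg _)
  have hw : ∀ n, pmf n * (c * (n.choose ℓ : ℝ)) = if ℓ ≤ n then pmf (n - ℓ) else 0 := by
    intro n
    by_cases h : ℓ ≤ n
    · rw [if_pos h]
      have hfac1 : ((Nat.factorial (n - ℓ) : ℝ)) ≠ 0 :=
        Nat.cast_ne_zero.2 (Nat.factorial_ne_zero _)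
      have hfac2 : ((Nat.factorial n : ℝ)) ≠ 0 := Nat.cast_ne_zero.2 (Nat.factorial_ne_zero _)
      have hfac3 : ((Nat.factorial ℓ : ℝ)) ≠ 0 := Nat.cast_ne_zero.2 (Nat.factorial_ne_zero _)
      have hM0 : (0 : ℝ) < (M₀ : ℝ) := by exact_mod_cast hM₀
      have hpow : ((M₀ : ℝ)) ^ ℓ ≠ 0 := pow_ne_zero _ (ne_of_gt hM0)
      simp only [hpmf, poissonPMFReal, hc]
      rw [Nat.cast_choose ℝ h, ← pow_sub_mul_pow ((M₀ : ℝ)) h]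
      field_simp
    · rw [if_neg h, Nat.choose_eq_zero_of_lt (lt_of_not_ge h)]
      simp
  have hwsum : Summable (fun n => if ℓ ≤ n then pmf (n - ℓ) else 0) := by
    refine (_root_.summable_nat_add_iff ℓ).mp ?_
    have : (fun n => if ℓ ≤ n + ℓ then pmf (n + ℓ - ℓ) else 0) = pmf := by
      funext n
      rw [if_pos (Nat.le_add_left ℓ n), Nat.add_sub_cancel]
    rw [this]
    exact hsummable
  -- lintegral bound for indicator-cut summands
  have hlint : ∀ (n : ℕ) (g : Ωs → ℝ) (B : ℝ), 0 ≤ B → Measurable g → (∀ ω, |g ω| ≤ B) →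
      ∫⁻ ω, ‖(if M ω = n then (1 : ℝ) else 0) * g ω‖₊ ∂P ≤ ENNReal.ofReal (pmf n * B) := by
    intro n g B hB hg hgB
    have hset : MeasurableSet (M ⁻¹' {n}) := hM (measurableSet_singleton n)
    have hpt : ∀ ω, (‖(if M ω = n then (1 : ℝ) else 0) * g ω‖₊ : ℝ≥0∞)
        ≤ (M ⁻¹' {n}).indicator (fun _ => ENNReal.ofReal B) ω := by
      intro ω
      by_cases h : M ω = n
      · have hmem : ω ∈ M ⁻¹' {n} := h
        rw [Set.indicator_of_mem hmem, if_pos h, one_mul, ← enorm_eq_nnnorm, Real.enorm_eq_ofReal_abs]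
        exact ENNReal.ofReal_le_ofReal (hgB ω)
      · have hmem : ω ∉ M ⁻¹' {n} := h
        rw [Set.indicator_of_notMem hmem, if_neg h, zero_mul]
        simp
    calc ∫⁻ ω, ‖(if M ω = n then (1 : ℝ) else 0) * g ω‖₊ ∂P
        ≤ ∫⁻ ω, (M ⁻¹' {n}).indicator (fun _ => ENNReal.ofReal B) ω ∂P := lintegral_mono hpt
      _ = ENNReal.ofReal B * P (M ⁻¹' {n}) := lintegral_indicator_const hset _
      _ = ENNReal.ofReal (pmf n * B) := by
          rw [hprob n, ← ENNReal.ofReal_mul hB, mul_comm B (pmf n)]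
  -- interchange of integral and tsum
  have hfin : ∀ (g : ℕ → Ωs → ℝ) (B : ℕ → ℝ), (∀ n, 0 ≤ B n) →
      Summable (fun n => pmf n * B n) → (∀ n, Measurable (g n)) → (∀ n ω, |g n ω| ≤ B n) →
      ∫ ω, ∑' n, (if M ω = n then (1 : ℝ) else 0) * g n ω ∂P
        = ∑' n, ∫ ω, (if M ω = n then (1 : ℝ) else 0) * g n ω ∂P := by
    intro g B hB hsum hgmeas hgB
    refine integral_tsum (fun n => ?_) ?_
    · exact (((measurable_of_countable (fun t : ℕ => if t = n then (1 : ℝ) else 0)).comp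
        hM).mul (hgmeas n)).aestronglyMeasurable
    · have hle : ∀ n, ∫⁻ ω, ‖(if M ω = n then (1 : ℝ) else 0) * g n ω‖₊ ∂P
          ≤ ENNReal.ofReal (pmf n * B n) := fun n => hlint n (g n) (B n) (hB n) (hgmeas n)
            (hgB n)
      have h1 := ENNReal.tsum_le_tsum hle
      have h2 : ∑' n, ENNReal.ofReal (pmf n * B n) = ENNReal.ofReal (∑' n, pmf n * B n) :=
        (ENNReal.ofReal_tsum_of_nonneg (fun n => mul_nonneg (hpmf_nonneg n) (hB n)) hsum).symm
      exact ne_top_of_le_ne_top (by rw [h2]; exact ENNReal.ofReal_ne_top) h1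
  -- the law of R ∘ D under injective reindexing
  have hlawR : ∀ (t : ℕ) (s : ℕ → ℕ), (∀ i j, i < t → j < t → s i = s j → i = j) →
      ∫ ω, R (D t (fun k j => O k (s j) ω)) ∂P = f t := by
    intro t s hs
    set g : (Fin K × Fin t → (Fin J → ℝ)) → ℝ :=
      fun v => R (D t (fun k j => if h : j < t then v (k, ⟨j, h⟩) else 0)) with hgdef
    have hg : Measurable g := by
      refine (measurable_of_countable R).comp ((hDmeas t).comp ?_)
      refine measurable_pi_lambda _ fun k => measurable_pi_lambda _ fun j => ?_
      by_cases h : j < t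
      · simp only [dif_pos h]
        exact measurable_pi_apply _
      · simp only [dif_neg h]
        exact measurable_const
    have hgid : ∀ (s' : ℕ → ℕ) (ω : Ωs), R (D t (fun k j => O k (s' j) ω))
        = g (fun ki : Fin K × Fin t => O ki.1 (s' ki.2) ω) := by
      intro s' ω
      simp only [hgdef]
      congr 1
      apply hDlocal
      intro k j hj
      rw [dif_pos hj]
    have hmeasY : ∀ (s' : ℕ → ℕ),
        Measurable (fun ω (ki : Fin K × Fin t) => O ki.1 (s' ki.2) ω) :=
      fun s' => measurable_pi_lambda _ fun ki => hOmeas ki.1 (s' ki.2)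
    have hinj1 : Function.Injective (fun ki : Fin K × Fin t => ((ki.1, s ki.2) : Fin K × ℕ)) := by
      rintro ⟨k, i⟩ ⟨k', i'⟩ h
      simp only [Prod.mk.injEq] at h
      exact Prod.ext h.1 (Fin.ext (hs i i' i.isLt i'.isLt h.2))
    have hinj2 : Function.Injective (fun ki : Fin K × Fin t => ((ki.1, (ki.2 : ℕ)) : Fin K × ℕ)) := by
      rintro ⟨k, i⟩ ⟨k', i'⟩ h
      simp only [Prod.mk.injEq] at h
      exact Prod.ext h.1 (Fin.ext h.2)
    have h1 : Measure.map (fun ω (ki : Fin K × Fin t) => O ki.1 (s ki.2) ω) P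
        = Measure.pi (fun ki : Fin K × Fin t => Measure.map (O ki.1 (s ki.2)) P) :=
      aux_map_pi hOindep (fun km => hOmeas km.1 km.2) _ hinj1
    have h2 : Measure.map (fun ω (ki : Fin K × Fin t) => O ki.1 (ki.2 : ℕ) ω) P
        = Measure.pi (fun ki : Fin K × Fin t => Measure.map (O ki.1 (ki.2 : ℕ)) P) :=
      aux_map_pi hOindep (fun km => hOmeas km.1 km.2) _ hinj2
    have hlaw : Measure.map (fun ω (ki : Fin K × Fin t) => O ki.1 (s ki.2) ω) P
        = Measure.map (fun ω (ki : Fin K × Fin t) => O ki.1 (ki.2 : ℕ) ω) P := by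
      rw [h1, h2]
      congr 1
      funext ki
      exact hOident ki.1 (s ki.2) (ki.2 : ℕ)
    calc ∫ ω, R (D t (fun k j => O k (s j) ω)) ∂P
        = ∫ ω, g (fun ki : Fin K × Fin t => O ki.1 (s ki.2) ω) ∂P := by
          simp only [hgid s]
      _ = ∫ v, g v ∂(Measure.map (fun ω (ki : Fin K × Fin t) => O ki.1 (s ki.2) ω) P) :=
          (integral_map (hmeasY s).aemeasurable hg.aestronglyMeasurable).symm
      _ = ∫ v, g v ∂(Measure.map (fun ω (ki : Fin K × Fin t) => O ki.1 (ki.2 : ℕ) ω) P) := by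
          rw [hlaw]
      _ = ∫ ω, g (fun ki : Fin K × Fin t => O ki.1 (ki.2 : ℕ) ω) ∂P :=
          integral_map (hmeasY (fun j => j)).aemeasurable hg.aestronglyMeasurable
      _ = f t := by
          refine integral_congr_ae (Filter.Eventually.of_forall fun ω => ?_)
          exact (hgid (fun j => j) ω).symm
  -- the key unbiasedness step
  have hkey : ∀ (t : ℕ) (s : ℕ → ℕ) (m : ℕ) (k₀ : Fin K),
      (∀ j, j < t → s j ≠ m) →
      ∫ ω, (if D t (fun k j => O k (s j) ω) = k₀ then ψ (O k₀ m ω) else 0) ∂P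
        = (P ((fun ω => D t (fun k j => O k (s j) ω)) ⁻¹' {k₀})).toReal * R k₀ := by
    intro t s m k₀ hne
    set S : Finset (Fin K × ℕ) := Finset.univ ×ˢ (Finset.range t).image s with hSdef
    have hmemS : ∀ k j, j < t → ((k, s j) : Fin K × ℕ) ∈ S := by
      intro k j hj
      exact Finset.mem_product.2 ⟨Finset.mem_univ k,
        Finset.mem_image.2 ⟨j, Finset.mem_range.2 hj, rfl⟩⟩
    have hdisj : Disjoint S ({((k₀, m) : Fin K × ℕ)} : Finset (Fin K × ℕ)) := by
      rw [Finset.disjoint_singleton_right]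
      simp only [hSdef, Finset.mem_product, Finset.mem_image, Finset.mem_range]
      rintro ⟨-, j, hj, hjm⟩
      exact hne j hj hjm
    have hbase := hOindep.indepFun_finset S {((k₀, m) : Fin K × ℕ)} hdisj
      (fun km => hOmeas km.1 km.2)
    have hφ₁ : Measurable (fun v : { x // x ∈ S } → (Fin J → ℝ) =>
        if D t (fun k j => if h : ((k, s j) : Fin K × ℕ) ∈ S then v ⟨(k, s j), h⟩ else 0) = k₀
          then (1 : ℝ) else 0) := by
      have hmeas_inner : Measurable (fun v : { x // x ∈ S } → (Fin J → ℝ) =>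
          (fun k j => if h : ((k, s j) : Fin K × ℕ) ∈ S then v ⟨(k, s j), h⟩ else 0 :
            Fin K → ℕ → Fin J → ℝ)) := by
        refine measurable_pi_lambda _ fun k => measurable_pi_lambda _ fun j => ?_
        by_cases h : ((k, s j) : Fin K × ℕ) ∈ S
        · simp only [dif_pos h]
          exact measurable_pi_apply _
        · simp only [dif_neg h]
          exact measurable_const
      exact Measurable.ite (((hDmeas t).comp hmeas_inner) (measurableSet_singleton k₀))
        measurable_const measurable_const
    have hφ₂ : Measurable (fun v : { x // x ∈ ({((k₀, m) : Fin K × ℕ)} : Finset (Fin K × ℕ)) } →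
        (Fin J → ℝ) => ψ (v ⟨(k₀, m), Finset.mem_singleton_self _⟩)) :=
      hψ.comp (measurable_pi_apply _)
    have hcomp : IndepFun
        (fun ω => if D t (fun k j =>
            if h : ((k, s j) : Fin K × ℕ) ∈ S then O k (s j) ω else 0) = k₀
          then (1 : ℝ) else 0)
        (fun ω => ψ (O k₀ m ω)) P := hbase.comp hφ₁ hφ₂
    have hD : ∀ ω, D t (fun k j =>
        if h : ((k, s j) : Fin K × ℕ) ∈ S then O k (s j) ω else 0)
        = D t (fun k j => O k (s j) ω) := by
      intro ω
      apply hDlocal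
      intro k j hj
      rw [dif_pos (hmemS k j hj)]
    have heqX : (fun ω => if D t (fun k j =>
          if h : ((k, s j) : Fin K × ℕ) ∈ S then O k (s j) ω else 0) = k₀
        then (1 : ℝ) else 0)
        = fun ω => if D t (fun k j => O k (s j) ω) = k₀ then (1 : ℝ) else 0 := by
      funext ω
      rw [hD ω]
    rw [heqX] at hcomp
    have hXmeas : Measurable (fun ω => if D t (fun k j => O k (s j) ω) = k₀
        then (1 : ℝ) else 0) :=
      Measurable.ite ((hDmeas' t s) (measurableSet_singleton k₀)) measurable_const
        measurable_const
    have hYmeas : Measurable (fun ω => ψ (O k₀ m ω)) := hψ.comp (hOmeas k₀ m)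
    have hmul := hcomp.integral_mul_eq_mul_integral hXmeas.aestronglyMeasurable hYmeas.aestronglyMeasurable
    have hptw : ∀ ω, (if D t (fun k j => O k (s j) ω) = k₀ then ψ (O k₀ m ω) else 0)
        = (if D t (fun k j => O k (s j) ω) = k₀ then (1 : ℝ) else 0) * ψ (O k₀ m ω) := by
      intro ω
      by_cases h : D t (fun k j => O k (s j) ω) = k₀ <;> simp [h]
    have hset : MeasurableSet ((fun ω => D t (fun k j => O k (s j) ω)) ⁻¹' {k₀}) :=
      (hDmeas' t s) (measurableSet_singleton k₀)
    have hXint : ∫ ω, (if D t (fun k j => O k (s j) ω) = k₀ then (1 : ℝ) else 0) ∂P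
        = (P ((fun ω => D t (fun k j => O k (s j) ω)) ⁻¹' {k₀})).toReal := by
      have heq : (fun ω => if D t (fun k j => O k (s j) ω) = k₀ then (1 : ℝ) else 0)
          = ((fun ω => D t (fun k j => O k (s j) ω)) ⁻¹' {k₀}).indicator 1 := by
        funext ω
        by_cases h : D t (fun k j => O k (s j) ω) = k₀ <;> simp [Set.indicator, h]
      rw [heq, integral_indicator_one hset]
      rfl
    calc ∫ ω, (if D t (fun k j => O k (s j) ω) = k₀ then ψ (O k₀ m ω) else 0) ∂P
        = ∫ ω, (if D t (fun k j => O k (s j) ω) = k₀ then (1 : ℝ) else 0) *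
            ψ (O k₀ m ω) ∂P := by simp only [hptw]
      _ = (∫ ω, (if D t (fun k j => O k (s j) ω) = k₀ then (1 : ℝ) else 0) ∂P) *
            ∫ ω, ψ (O k₀ m ω) ∂P := hmul
      _ = (P ((fun ω => D t (fun k j => O k (s j) ω)) ⁻¹' {k₀})).toReal * R k₀ := by
          rw [hXint, hR k₀ m]
  -- consequence: integral over a fold
  have hfold : ∀ (t : ℕ) (s : ℕ → ℕ) (m : ℕ),
      (∀ i j, i < t → j < t → s i = s j → i = j) →
      (∀ j, j < t → s j ≠ m) →
      ∫ ω, ψ (O (D t (fun k j => O k (s j) ω)) m ω) ∂P = f t := by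
    intro t s m hinj hne
    have hDts := hDmeas' t s
    have hpt : ∀ ω, ψ (O (D t (fun k j => O k (s j) ω)) m ω)
        = ∑ k : Fin K, if D t (fun k' j => O k' (s j) ω) = k then ψ (O k m ω) else 0 := by
      intro ω
      rw [Finset.sum_ite_eq Finset.univ (D t fun k' j => O k' (s j) ω) (fun k => ψ (O k m ω))]
      simp
    have hpt2 : ∀ ω, R (D t (fun k j => O k (s j) ω))
        = ∑ k : Fin K, if D t (fun k' j => O k' (s j) ω) = k then R k else 0 := by
      intro ω
      rw [Finset.sum_ite_eq Finset.univ (D t fun k' j => O k' (s j) ω) (fun k => R k)]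
      simp
    have hint : ∀ k : Fin K, Integrable (fun ω =>
        if D t (fun k' j => O k' (s j) ω) = k then ψ (O k m ω) else 0) P := by
      intro k
      refine hintble _ C (Measurable.ite (hDts (measurableSet_singleton k))
        (hψ.comp (hOmeas k m)) measurable_const) fun ω => ?_
      by_cases h : D t (fun k' j => O k' (s j) ω) = k
      · rw [if_pos h]; exact hbdd _
      · rw [if_neg h]; simpa using h0C
    have hint2 : ∀ k : Fin K, Integrable (fun ω =>
        if D t (fun k' j => O k' (s j) ω) = k then R k else 0) P := by
      intro k
      refine hintble _ C (Measurable.ite (hDts (measurableSet_singleton k))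
        measurable_const measurable_const) fun ω => ?_
      by_cases h : D t (fun k' j => O k' (s j) ω) = k
      · rw [if_pos h]; exact hRbdd k
      · rw [if_neg h]; simpa using h0C
    have hval2 : ∀ k : Fin K, ∫ ω, (if D t (fun k' j => O k' (s j) ω) = k then R k else 0) ∂P
        = (P ((fun ω => D t (fun k' j => O k' (s j) ω)) ⁻¹' {k})).toReal * R k := by
      intro k
      have hset : MeasurableSet ((fun ω => D t (fun k' j => O k' (s j) ω)) ⁻¹' {k}) :=
        hDts (measurableSet_singleton k)
      have heq : (fun ω => if D t (fun k' j => O k' (s j) ω) = k then R k else 0)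
          = ((fun ω => D t (fun k' j => O k' (s j) ω)) ⁻¹' {k}).indicator (fun _ => R k) := by
        funext ω
        by_cases h : D t (fun k' j => O k' (s j) ω) = k <;>
          simp [Set.indicator, h]
      rw [heq, integral_indicator_const (R k) hset, smul_eq_mul]
      rfl
    calc ∫ ω, ψ (O (D t fun k j => O k (s j) ω) m ω) ∂P
        = ∫ ω, ∑ k : Fin K,
            (if D t (fun k' j => O k' (s j) ω) = k then ψ (O k m ω) else 0) ∂P := by
          simp only [hpt]
      _ = ∑ k : Fin K, ∫ ω,
            (if D t (fun k' j => O k' (s j) ω) = k then ψ (O k m ω) else 0) ∂P :=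
          integral_finset_sum _ fun k _ => hint k
      _ = ∑ k : Fin K,
            (P ((fun ω => D t (fun k' j => O k' (s j) ω)) ⁻¹' {k})).toReal * R k :=
          Finset.sum_congr rfl fun k _ => hkey t s m k hne
      _ = ∑ k : Fin K, ∫ ω,
            (if D t (fun k' j => O k' (s j) ω) = k then R k else 0) ∂P :=
          Finset.sum_congr rfl fun k _ => (hval2 k).symm
      _ = ∫ ω, ∑ k : Fin K,
            (if D t (fun k' j => O k' (s j) ω) = k then R k else 0) ∂P :=
          (integral_finset_sum _ fun k _ => hint2 k).symm
      _ = ∫ ω, R (D t fun k j => O k (s j) ω) ∂P := by simp only [← hpt2]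
      _ = f t := hlawR t s hinj
  -- integral of G n
  have hGmeas : ∀ n, Measurable (G n) := by
    intro n
    refine Finset.measurable_sum _ fun p _ => Measurable.const_mul ?_ _
    refine Finset.measurable_sum _ fun m _ => ?_
    have : (fun ω => ψ (O (DP n p ω) m ω))
        = fun ω => ∑ k : Fin K, if DP n p ω = k then ψ (O k m ω) else 0 := by
      funext ω
      rw [Finset.sum_ite_eq (Finset.univ) (DP n p ω) (fun k => ψ (O k m ω))]
      simp
    rw [this]
    refine Finset.measurable_sum _ fun k _ => Measurable.ite ?_ (hψ.comp (hOmeas k m))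
      measurable_const
    exact (hDmeas' (n - ℓ) (sfun n p)) (measurableSet_singleton k)
  have hℓpos : (0 : ℝ) < (ℓ : ℝ) := by exact_mod_cast hℓ
  have hfoldbdd : ∀ n p ω, p ∈ Finset.powersetCard ℓ (Finset.range n) →
      |(ℓ : ℝ)⁻¹ * ∑ m ∈ p, ψ (O (DP n p ω) m ω)| ≤ C := by
    intro n p ω hp
    have hpcard : p.card = ℓ := (Finset.mem_powersetCard.1 hp).2
    have h1 : |∑ m ∈ p, ψ (O (DP n p ω) m ω)| ≤ (ℓ : ℝ) * C := by
      calc |∑ m ∈ p, ψ (O (DP n p ω) m ω)| ≤ ∑ m ∈ p, |ψ (O (DP n p ω) m ω)| :=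
          Finset.abs_sum_le_sum_abs _ _
        _ ≤ ∑ _m ∈ p, C := Finset.sum_le_sum fun m _ => hbdd _
        _ = (ℓ : ℝ) * C := by rw [Finset.sum_const, hpcard, nsmul_eq_mul]
    rw [abs_mul, abs_inv, Nat.abs_cast]
    calc (ℓ : ℝ)⁻¹ * |∑ m ∈ p, ψ (O (DP n p ω) m ω)| ≤ (ℓ : ℝ)⁻¹ * ((ℓ : ℝ) * C) :=
        mul_le_mul_of_nonneg_left h1 (inv_nonneg.2 hℓpos.le)
      _ = C := by field_simp
  have hGbdd : ∀ n ω, |G n ω| ≤ (n.choose ℓ : ℝ) * C := by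
    intro n ω
    calc |G n ω| ≤ ∑ p ∈ Finset.powersetCard ℓ (Finset.range n),
        |(ℓ : ℝ)⁻¹ * ∑ m ∈ p, ψ (O (DP n p ω) m ω)| := Finset.abs_sum_le_sum_abs _ _
      _ ≤ ∑ _p ∈ Finset.powersetCard ℓ (Finset.range n), C :=
          Finset.sum_le_sum fun p hp => hfoldbdd n p ω hp
      _ = (n.choose ℓ : ℝ) * C := by
          rw [Finset.sum_const, nsmul_eq_mul, Finset.card_powersetCard, Finset.card_range]
  have hterm_meas : ∀ n p m, Measurable (fun ω => ψ (O (DP n p ω) m ω)) := by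
    intro n p m
    have heq : (fun ω => ψ (O (DP n p ω) m ω))
        = fun ω => ∑ k : Fin K, if DP n p ω = k then ψ (O k m ω) else 0 := by
      funext ω
      rw [Finset.sum_ite_eq Finset.univ (DP n p ω) (fun k => ψ (O k m ω))]
      simp
    rw [heq]
    exact Finset.measurable_sum _ fun k _ => Measurable.ite
      ((hDmeas' (n - ℓ) (sfun n p)) (measurableSet_singleton k)) (hψ.comp (hOmeas k m))
      measurable_const
  have hterm_int : ∀ n p m, Integrable (fun ω => ψ (O (DP n p ω) m ω)) P :=
    fun n p m => hintble _ C (hterm_meas n p m) fun ω => hbdd _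
  have hfold_int : ∀ n p, Integrable (fun ω => (ℓ : ℝ)⁻¹ *
      ∑ m ∈ p, ψ (O (DP n p ω) m ω)) P :=
    fun n p => (integrable_finset_sum p fun m _ => hterm_int n p m).const_mul _
  have hℓR : (ℓ : ℝ) ≠ 0 := by
    have : (0 : ℝ) < (ℓ : ℝ) := by exact_mod_cast hℓ
    exact ne_of_gt this
  have hfold_val : ∀ n p, p ∈ Finset.powersetCard ℓ (Finset.range n) →
      ∫ ω, (ℓ : ℝ)⁻¹ * ∑ m ∈ p, ψ (O (DP n p ω) m ω) ∂P = f (n - ℓ) := by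
    intro n p hp
    obtain ⟨hsub, hpcard⟩ := Finset.mem_powersetCard.1 hp
    have hcard : (Finset.range n \ p).card = n - ℓ := by
      rw [Finset.card_sdiff_of_subset hsub, Finset.card_range, hpcard]
    have hlen : ((Finset.range n \ p).sort (· ≤ ·)).length = n - ℓ := by
      rw [Finset.length_sort, hcard]
    have hmem_s : ∀ j, j < n - ℓ → sfun n p j ∈ Finset.range n \ p := by
      intro j hj
      have hj' : j < ((Finset.range n \ p).sort (· ≤ ·)).length := by rw [hlen]; exact hj
      show ((Finset.range n \ p).sort (· ≤ ·)).getD j 0 ∈ Finset.range n \ p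
      rw [List.getD_eq_getElem _ _ hj']
      exact (Finset.mem_sort _).1 (List.getElem_mem _)
    have hinjs : ∀ i j, i < n - ℓ → j < n - ℓ → sfun n p i = sfun n p j → i = j := by
      intro i j hi hj hij
      have hi' : i < ((Finset.range n \ p).sort (· ≤ ·)).length := by rw [hlen]; exact hi
      have hj' : j < ((Finset.range n \ p).sort (· ≤ ·)).length := by rw [hlen]; exact hj
      have hnd : ((Finset.range n \ p).sort (· ≤ ·)).Nodup := Finset.sort_nodup _ _
      have hij' : ((Finset.range n \ p).sort (· ≤ ·)).getD i 0
          = ((Finset.range n \ p).sort (· ≤ ·)).getD j 0 := hij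
      rw [List.getD_eq_getElem _ _ hi', List.getD_eq_getElem _ _ hj'] at hij'
      exact (List.Nodup.getElem_inj_iff hnd).1 hij'
    have hfoldm : ∀ m ∈ p, ∫ ω, ψ (O (DP n p ω) m ω) ∂P = f (n - ℓ) := by
      intro m hm
      have hnem : ∀ j, j < n - ℓ → sfun n p j ≠ m := by
        intro j hj hcontra
        have := hmem_s j hj
        rw [hcontra] at this
        exact (Finset.mem_sdiff.1 this).2 hm
      exact hfold (n - ℓ) (sfun n p) m hinjs hnem
    rw [integral_const_mul]
    rw [integral_finset_sum p fun m _ => hterm_int n p m]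
    rw [Finset.sum_congr rfl hfoldm, Finset.sum_const, hpcard, nsmul_eq_mul]
    field_simp
  have hGval : ∀ n, ∫ ω, G n ω ∂P = (n.choose ℓ : ℝ) * f (n - ℓ) := by
    intro n
    have : ∫ ω, G n ω ∂P = ∑ p ∈ Finset.powersetCard ℓ (Finset.range n),
        ∫ ω, (ℓ : ℝ)⁻¹ * ∑ m ∈ p, ψ (O (DP n p ω) m ω) ∂P := by
      simp only [hG]
      exact integral_finset_sum _ fun p _ => hfold_int n p
    rw [this, Finset.sum_congr rfl (hfold_val n), Finset.sum_const,
      Finset.card_powersetCard, Finset.card_range, nsmul_eq_mul]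
  -- splitting off the independent Poisson size
  have hsplit : ∀ (n : ℕ) (g : Ωs → ℝ) (φ : (Fin K × ℕ → (Fin J → ℝ)) → ℝ),
      Measurable φ → (g = fun ω => φ (fun km => O km.1 km.2 ω)) →
      ∫ ω, (if M ω = n then (1 : ℝ) else 0) * g ω ∂P = pmf n * ∫ ω, g ω ∂P := by
    intro n g φ hφ hgφ
    have hOvec : Measurable (fun ω => fun km : Fin K × ℕ => O km.1 km.2 ω) :=
      measurable_pi_lambda _ fun km => hOmeas km.1 km.2
    have hχ : Measurable (fun t : ℕ => if t = n then (1 : ℝ) else 0) :=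
      measurable_of_countable _
    have hind : IndepFun (fun ω => if M ω = n then (1 : ℝ) else 0) g P := by
      have h := hMindep.comp hχ hφ
      rw [hgφ]
      exact h
    have hXmeas : Measurable (fun ω => if M ω = n then (1 : ℝ) else 0) := hχ.comp hM
    have hgmeas : Measurable g := by rw [hgφ]; exact hφ.comp hOvec
    have h1 : ∫ ω, (if M ω = n then (1 : ℝ) else 0) ∂P = pmf n := by
      have hset : MeasurableSet (M ⁻¹' {n}) := hM (measurableSet_singleton n)
      have heq : (fun ω => if M ω = n then (1 : ℝ) else 0)
          = (M ⁻¹' {n}).indicator (fun _ => (1 : ℝ)) := by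
        funext ω
        by_cases h : M ω = n <;> simp [Set.indicator, h]
      rw [heq]
      have := integral_indicator_one (μ := P) hset
      rw [show ((M ⁻¹' {n}).indicator (fun _ => (1 : ℝ))) = (M ⁻¹' {n}).indicator 1 from rfl,
        this, measureReal_def, hprob n, ENNReal.toReal_ofReal (hpmf_nonneg n)]
    have h2 : (fun ω => (if M ω = n then (1 : ℝ) else 0) * g ω)
        = (fun ω => if M ω = n then (1 : ℝ) else 0) * g := rfl
    calc ∫ ω, (if M ω = n then (1 : ℝ) else 0) * g ω ∂P
        = ∫ ω, ((fun ω => if M ω = n then (1 : ℝ) else 0) * g) ω ∂P := by rw [← h2]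
      _ = (∫ ω, (if M ω = n then (1 : ℝ) else 0) ∂P) * ∫ ω, g ω ∂P :=
          hind.integral_mul_eq_mul_integral hXmeas.aestronglyMeasurable hgmeas.aestronglyMeasurable
      _ = pmf n * ∫ ω, g ω ∂P := by rw [h1]
  -- G n composed through the joint observation vector
  have hGcomp : ∀ n, ∃ φ : (Fin K × ℕ → (Fin J → ℝ)) → ℝ, Measurable φ ∧
      G n = fun ω => φ (fun km => O km.1 km.2 ω) := by
    intro n
    refine ⟨fun v => ∑ p ∈ Finset.powersetCard ℓ (Finset.range n), (ℓ : ℝ)⁻¹ *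
      ∑ m ∈ p, ∑ k : Fin K,
        if D (n - ℓ) (fun k' j => v (k', sfun n p j)) = k then ψ (v (k, m)) else 0,
      ?_, ?_⟩
    · refine Finset.measurable_sum _ fun p _ => Measurable.const_mul ?_ _
      refine Finset.measurable_sum _ fun m _ => Finset.measurable_sum _ fun k _ => ?_
      have hasm : Measurable (fun v : Fin K × ℕ → (Fin J → ℝ) =>
          (fun k' j => v (k', sfun n p j)) : _ → (Fin K → ℕ → (Fin J → ℝ))) :=
        measurable_pi_lambda _ fun k' => measurable_pi_lambda _ fun j =>
          measurable_pi_apply _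
      exact Measurable.ite (((hDmeas (n - ℓ)).comp hasm) (measurableSet_singleton k))
        (hψ.comp (measurable_pi_apply (k, m))) measurable_const
    · funext ω
      simp only [hG]
      refine Finset.sum_congr rfl fun p _ => ?_
      congr 1
      refine Finset.sum_congr rfl fun m _ => ?_
      rw [Finset.sum_ite_eq (Finset.univ) (DP n p ω) (fun k => ψ (O k m ω))]
      simp
  -- LHS computation
  have hLHS : ∫ ω, c * ∑ p ∈ Finset.powersetCard ℓ (Finset.range (M ω)), RCV ω p ∂P
      = ∑' n : ℕ, pmf n * (c * ((n.choose ℓ : ℝ) * f (n - ℓ))) := by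
    have hLHSpt : ∀ ω, c * ∑ p ∈ Finset.powersetCard ℓ (Finset.range (M ω)), RCV ω p
        = ∑' n : ℕ, (if M ω = n then (1 : ℝ) else 0) * (c * G n ω) := by
      intro ω
      rw [eq_comm]
      rw [tsum_eq_single (M ω) (fun b hb => by
        rw [if_neg (fun h => hb h.symm), zero_mul])]
      rw [if_pos rfl, one_mul]
      congr 1
      simp only [hG, hRCV, hDecCV, hDP, hsfun]
    have hB_nonneg : ∀ n : ℕ, (0 : ℝ) ≤ c * ((n.choose ℓ : ℝ) * C) :=
      fun n => mul_nonneg hc_nonneg (mul_nonneg (Nat.cast_nonneg _) h0C)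
    have hBsum : Summable (fun n => pmf n * (c * ((n.choose ℓ : ℝ) * C))) := by
      have heq : (fun n => pmf n * (c * ((n.choose ℓ : ℝ) * C)))
          = fun n => (if ℓ ≤ n then pmf (n - ℓ) else 0) * C := by
        funext n
        rw [← hw n]
        ring
      rw [heq]
      exact hwsum.mul_right C
    have hcGbdd : ∀ n ω, |c * G n ω| ≤ c * ((n.choose ℓ : ℝ) * C) := by
      intro n ω
      rw [abs_mul, abs_of_nonneg hc_nonneg]
      exact mul_le_mul_of_nonneg_left (hGbdd n ω) hc_nonneg
    calc ∫ ω, c * ∑ p ∈ Finset.powersetCard ℓ (Finset.range (M ω)), RCV ω p ∂P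
        = ∫ ω, ∑' n : ℕ, (if M ω = n then (1 : ℝ) else 0) * (c * G n ω) ∂P := by
          simp only [hLHSpt]
      _ = ∑' n : ℕ, ∫ ω, (if M ω = n then (1 : ℝ) else 0) * (c * G n ω) ∂P :=
          hfin (fun n ω => c * G n ω) (fun n => c * ((n.choose ℓ : ℝ) * C)) hB_nonneg hBsum
            (fun n => (hGmeas n).const_mul c) hcGbdd
      _ = ∑' n : ℕ, pmf n * (c * ((n.choose ℓ : ℝ) * f (n - ℓ))) := by
          refine tsum_congr fun n => ?_
          obtain ⟨φn, hφn, hGn⟩ := hGcomp n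
          rw [hsplit n (fun ω => c * G n ω) (fun v => c * φn v) (hφn.const_mul c)
            (by rw [hGn])]
          rw [integral_const_mul, hGval n]
  -- RHS computation
  have hRHS : ∫ ω, R (DecFull ω) ∂P = ∑' n : ℕ, pmf n * f n := by
    have hRpt : ∀ ω, R (DecFull ω)
        = ∑' n : ℕ, (if M ω = n then (1 : ℝ) else 0) * R (D n (fun k m => O k m ω)) := by
      intro ω
      rw [eq_comm]
      rw [tsum_eq_single (M ω) (fun b hb => by
        rw [if_neg (fun h => hb h.symm), zero_mul])]
      rw [if_pos rfl, one_mul, hDecFull]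
    have hRn_meas : ∀ n : ℕ, Measurable (fun ω => R (D n (fun k m => O k m ω))) := by
      intro n
      exact (measurable_of_countable R).comp ((hDmeas n).comp
        (measurable_pi_lambda _ fun k => measurable_pi_lambda _ fun m => hOmeas k m))
    calc ∫ ω, R (DecFull ω) ∂P
        = ∫ ω, ∑' n : ℕ, (if M ω = n then (1 : ℝ) else 0) *
            R (D n (fun k m => O k m ω)) ∂P := by simp only [hRpt]
      _ = ∑' n : ℕ, ∫ ω, (if M ω = n then (1 : ℝ) else 0) *
            R (D n (fun k m => O k m ω)) ∂P :=
          hfin (fun n ω => R (D n (fun k m => O k m ω))) (fun _ => C) (fun _ => h0C)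
            (hsummable.mul_right C) hRn_meas (fun n ω => hRbdd _)
      _ = ∑' n : ℕ, pmf n * f n := by
          refine tsum_congr fun n => ?_
          rw [hsplit n (fun ω => R (D n (fun k m => O k m ω)))
            (fun v => R (D n (fun k m => v (k, m))))
            ((measurable_of_countable R).comp ((hDmeas n).comp
              (measurable_pi_lambda _ fun k => measurable_pi_lambda _ fun m =>
                measurable_pi_apply (k, m)))) rfl]
  -- Poisson arithmetic
  have harith : ∑' n : ℕ, pmf n * (c * ((n.choose ℓ : ℝ) * f (n - ℓ)))
      = ∑' n : ℕ, pmf n * f n := by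
    have step1 : ∀ n : ℕ, pmf n * (c * ((n.choose ℓ : ℝ) * f (n - ℓ)))
        = (if ℓ ≤ n then pmf (n - ℓ) * f (n - ℓ) else 0) := by
      intro n
      have : pmf n * (c * ((n.choose ℓ : ℝ) * f (n - ℓ)))
          = (pmf n * (c * (n.choose ℓ : ℝ))) * f (n - ℓ) := by ring
      rw [this, hw n]
      split_ifs with h
      · rfl
      · rw [zero_mul]
    rw [tsum_congr step1]
    have hinj : Function.Injective (fun m : ℕ => m + ℓ) := add_left_injective ℓ
    have hzero : ∀ x : ℕ, x ∉ Set.range (fun m : ℕ => m + ℓ) →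
        (if ℓ ≤ x then pmf (x - ℓ) * f (x - ℓ) else 0) = 0 := by
      intro x hx
      rw [if_neg]
      intro hle
      exact hx ⟨x - ℓ, Nat.sub_add_cancel hle⟩
    have hsupp : (Function.support fun x => if ℓ ≤ x then pmf (x - ℓ) * f (x - ℓ) else 0)
        ⊆ Set.range (fun m : ℕ => m + ℓ) := by
      intro x hx
      by_contra hmem
      exact hx (hzero x hmem)
    have := Function.Injective.tsum_eq hinj
      (f := fun x => if ℓ ≤ x then pmf (x - ℓ) * f (x - ℓ) else 0) hsupp
    rw [← this]
    refine tsum_congr fun m => ?_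
    rw [if_pos (Nat.le_add_left ℓ m), Nat.add_sub_cancel]
  rw [hLHS, harith, ← hRHS]
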